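/- Let H and H' be probability measures on [0,1]² with cumulative distribution functions H(x,y) = H([0,x]×[0,y]) and H'(x,y) = H'([0,x]×[0,y]), and let a : [0,1] → [0,1] be a continuous strictly increasing bijection with inverse a⁻. Then | ∫_{[0,1]²} (1/2)·|a(u1) − a⁻(u2)| dH − ∫_{[0,1]²} (1/2)·|a(u1) − a⁻(u2)| dH' | ≤ 2·sup_{(x,y) ∈ [0,1]²} |H(x,y) − H'(x,y)|. -/

import Mathlib

open MeasureTheory

/-- The bivariate cumulative distribution function `H(x, y) = H([0,x] × [0,y])`
of a measure on the unit square. -/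
noncomputable def cdf2 (μ : Measure (ℝ × ℝ)) (x y : ℝ) : ℝ :=
  (μ (Set.Icc 0 x ×ˢ Set.Icc 0 y)).toReal


lemma open_rect_bound (μ ν : Measure (ℝ × ℝ)) [IsProbabilityMeasure μ] [IsProbabilityMeasure ν]
    (hμsupp : ∀ᵐ p ∂μ, p ∈ Set.Icc (0 : ℝ) 1 ×ˢ Set.Icc (0 : ℝ) 1)
    (hνsupp : ∀ᵐ p ∂ν, p ∈ Set.Icc (0 : ℝ) 1 ×ˢ Set.Icc (0 : ℝ) 1)
    {D : ℝ} (hD0 : 0 ≤ D)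
    (hD : ∀ x ∈ Set.Icc (0:ℝ) 1, ∀ y ∈ Set.Icc (0:ℝ) 1, |cdf2 μ x y - cdf2 ν x y| ≤ D)
    (x y : ℝ) :
    |(μ {p : ℝ × ℝ | p.1 < x ∧ p.2 < y}).toReal - (ν {p : ℝ × ℝ | p.1 < x ∧ p.2 < y}).toReal| ≤ D := by
  set xn : ℕ → ℝ := fun n => min (x - 1 / (n + 1)) 1 with hxn
  set yn : ℕ → ℝ := fun n => min (y - 1 / (n + 1)) 1 with hyn
  set s : ℕ → Set (ℝ × ℝ) := fun n => Set.Icc 0 (xn n) ×ˢ Set.Icc 0 (yn n) with hs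
  have hmono : Monotone s := by
    intro n m hnm
    have hc : (n:ℝ) ≤ m := Nat.cast_le.2 hnm
    have h1 : (1 : ℝ) / (m + 1) ≤ 1 / (n + 1) :=
      one_div_le_one_div_of_le (by positivity) (by linarith)
    exact Set.prod_mono (Set.Icc_subset_Icc le_rfl (le_min (by simp only [hxn]; linarith [min_le_left (x - 1/((n:ℝ)+1)) (1:ℝ)]) (min_le_right _ _)))
      (Set.Icc_subset_Icc le_rfl (le_min (by simp only [hyn]; linarith [min_le_left (y - 1/((n:ℝ)+1)) (1:ℝ)]) (min_le_right _ _)))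
  have hUeq : ∀ (m : Measure (ℝ × ℝ)), (∀ᵐ p ∂m, p ∈ Set.Icc (0 : ℝ) 1 ×ˢ Set.Icc (0 : ℝ) 1) →
      m {p : ℝ × ℝ | p.1 < x ∧ p.2 < y} = m (⋃ n, s n) := by
    intro m hm
    apply measure_congr
    rw [Filter.eventuallyEq_set]
    filter_upwards [hm] with p hp
    obtain ⟨⟨hp1, hp1'⟩, hp2, hp2'⟩ := hp
    constructor
    · rintro ⟨h1, h2⟩
      obtain ⟨n, hn⟩ := exists_nat_one_div_lt (show (0:ℝ) < min (x - p.1) (y - p.2) by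
        simp only [lt_min_iff]; constructor <;> linarith)
      refine Set.mem_iUnion.2 ⟨n, ⟨⟨hp1, le_min (by
        have := lt_min_iff.1 hn; linarith [this.1]) hp1'⟩, ⟨hp2, le_min (by
        have := lt_min_iff.1 hn; linarith [this.2]) hp2'⟩⟩⟩
    · intro h
      obtain ⟨n, hn⟩ := Set.mem_iUnion.1 h
      obtain ⟨⟨_, hn1⟩, _, hn2⟩ := hn
      have h1 : xn n ≤ x - 1 / (n + 1) := min_le_left _ _
      have h2 : yn n ≤ y - 1 / (n + 1) := min_le_left _ _
      have hpos : (0:ℝ) < 1 / (n + 1) := by positivity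
      exact ⟨by linarith, by linarith⟩
  have htendμ : Filter.Tendsto (fun n => (μ (s n)).toReal) Filter.atTop
      (nhds (μ {p : ℝ × ℝ | p.1 < x ∧ p.2 < y}).toReal) := by
    rw [hUeq μ hμsupp]
    exact (ENNReal.tendsto_toReal (measure_ne_top μ _)).comp (tendsto_measure_iUnion_atTop hmono)
  have htendν : Filter.Tendsto (fun n => (ν (s n)).toReal) Filter.atTop
      (nhds (ν {p : ℝ × ℝ | p.1 < x ∧ p.2 < y}).toReal) := by
    rw [hUeq ν hνsupp]
    exact (ENNReal.tendsto_toReal (measure_ne_top ν _)).comp (tendsto_measure_iUnion_atTop hmono)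
  have htend : Filter.Tendsto (fun n => |(μ (s n)).toReal - (ν (s n)).toReal|) Filter.atTop
      (nhds (|(μ {p : ℝ × ℝ | p.1 < x ∧ p.2 < y}).toReal - (ν {p : ℝ × ℝ | p.1 < x ∧ p.2 < y}).toReal|)) :=
    (htendμ.sub htendν).abs
  refine le_of_tendsto' htend fun n => ?_
  by_cases hx : 0 ≤ xn n
  · by_cases hy : 0 ≤ yn n
    · have := hD (xn n) ⟨hx, min_le_right _ _⟩ (yn n) ⟨hy, min_le_right _ _⟩
      simpa [cdf2, hs] using this
    · have hE : Set.Icc (0:ℝ) (yn n) = ∅ := Set.Icc_eq_empty (by linarith)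
      have hsE : s n = ∅ := by simp only [hs]; rw [hE, Set.prod_empty]
      rw [hsE]; simpa using hD0
  · have hE : Set.Icc (0:ℝ) (xn n) = ∅ := Set.Icc_eq_empty (by linarith)
    have hsE : s n = ∅ := by simp only [hs]; rw [hE, Set.empty_prod]
    rw [hsE]; simpa using hD0

lemma sdiff_toReal (m : Measure (ℝ × ℝ)) [IsFiniteMeasure m] {P Q : Set (ℝ × ℝ)}
    (hP : MeasurableSet P) (hQ : MeasurableSet Q) :
    (m {p | (p ∈ P) ≠ (p ∈ Q)}).toReal
      = (m P).toReal + (m Q).toReal - 2 * (m (P ∩ Q)).toReal := by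
  have hset : {p | (p ∈ P) ≠ (p ∈ Q)} = (P \ Q) ∪ (Q \ P) := by
    ext p
    by_cases h1 : p ∈ P <;> by_cases h2 : p ∈ Q <;> simp [h1, h2]
  have hdiffP : m (P \ Q) = m P - m (P ∩ Q) := by
    rw [← Set.diff_self_inter]
    exact measure_diff Set.inter_subset_left (hP.inter hQ).nullMeasurableSet (measure_ne_top m _)
  have hdiffQ : m (Q \ P) = m Q - m (P ∩ Q) := by
    rw [← Set.diff_self_inter, Set.inter_comm Q P]
    exact measure_diff Set.inter_subset_right (hP.inter hQ).nullMeasurableSet (measure_ne_top m _)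
  have hdisj : Disjoint (P \ Q) (Q \ P) := disjoint_sdiff_sdiff
  rw [hset, measure_union hdisj (hQ.diff hP), hdiffP, hdiffQ,
    ENNReal.toReal_add (by simp [measure_ne_top]) (by simp [measure_ne_top]),
    ENNReal.toReal_sub_of_le (measure_mono Set.inter_subset_left) (measure_ne_top m _),
    ENNReal.toReal_sub_of_le (measure_mono Set.inter_subset_right) (measure_ne_top m _)]
  ring
lemma xor_bound (μ ν : Measure (ℝ × ℝ)) [IsProbabilityMeasure μ] [IsProbabilityMeasure ν]
    (hμsupp : ∀ᵐ p ∂μ, p ∈ Set.Icc (0 : ℝ) 1 ×ˢ Set.Icc (0 : ℝ) 1)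
    (hνsupp : ∀ᵐ p ∂ν, p ∈ Set.Icc (0 : ℝ) 1 ×ˢ Set.Icc (0 : ℝ) 1)
    {D : ℝ} (hD0 : 0 ≤ D)
    (hD : ∀ x ∈ Set.Icc (0:ℝ) 1, ∀ y ∈ Set.Icc (0:ℝ) 1, |cdf2 μ x y - cdf2 ν x y| ≤ D)
    (x y : ℝ) :
    |(μ {p : ℝ × ℝ | (p.1 < x) ≠ (p.2 < y)}).toReal
      - (ν {p : ℝ × ℝ | (p.1 < x) ≠ (p.2 < y)}).toReal| ≤ 4 * D := by
  set P : Set (ℝ × ℝ) := {p | p.1 < x} with hPdef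
  set Q : Set (ℝ × ℝ) := {p | p.2 < y} with hQdef
  have hPm : MeasurableSet P := measurable_fst measurableSet_Iio
  have hQm : MeasurableSet Q := measurable_snd measurableSet_Iio
  have hXP : {p : ℝ × ℝ | (p.1 < x) ≠ (p.2 < y)} = {p | (p ∈ P) ≠ (p ∈ Q)} := rfl
  have hμX := sdiff_toReal μ hPm hQm
  have hνX := sdiff_toReal ν hPm hQm
  -- bound for P
  have hPset : ∀ (m : Measure (ℝ × ℝ)), (∀ᵐ p ∂m, p ∈ Set.Icc (0 : ℝ) 1 ×ˢ Set.Icc (0 : ℝ) 1) →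
      m P = m {p : ℝ × ℝ | p.1 < x ∧ p.2 < 2} := by
    intro m hm
    apply measure_congr
    rw [Filter.eventuallyEq_set]
    filter_upwards [hm] with p hp
    have : p.2 < 2 := by linarith [hp.2.2]
    simp [hPdef, this]
  have hQset : ∀ (m : Measure (ℝ × ℝ)), (∀ᵐ p ∂m, p ∈ Set.Icc (0 : ℝ) 1 ×ˢ Set.Icc (0 : ℝ) 1) →
      m Q = m {p : ℝ × ℝ | p.1 < 2 ∧ p.2 < y} := by
    intro m hm
    apply measure_congr
    rw [Filter.eventuallyEq_set]
    filter_upwards [hm] with p hp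
    have : p.1 < 2 := by linarith [hp.1.2]
    simp [hQdef, this]
  have hbP : |(μ P).toReal - (ν P).toReal| ≤ D := by
    rw [hPset μ hμsupp, hPset ν hνsupp]
    exact open_rect_bound μ ν hμsupp hνsupp hD0 hD x 2
  have hbQ : |(μ Q).toReal - (ν Q).toReal| ≤ D := by
    rw [hQset μ hμsupp, hQset ν hνsupp]
    exact open_rect_bound μ ν hμsupp hνsupp hD0 hD 2 y
  have hPQ : P ∩ Q = {p : ℝ × ℝ | p.1 < x ∧ p.2 < y} := rfl
  have hbPQ : |(μ (P ∩ Q)).toReal - (ν (P ∩ Q)).toReal| ≤ D := by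
    rw [hPQ]
    exact open_rect_bound μ ν hμsupp hνsupp hD0 hD x y
  rw [hXP, hμX, hνX]
  have := abs_sub_abs_le_abs_sub ((μ P).toReal) ((ν P).toReal)
  calc |(μ P).toReal + (μ Q).toReal - 2 * (μ (P ∩ Q)).toReal
        - ((ν P).toReal + (ν Q).toReal - 2 * (ν (P ∩ Q)).toReal)|
      = |((μ P).toReal - (ν P).toReal) + ((μ Q).toReal - (ν Q).toReal)
          + (-2) * ((μ (P ∩ Q)).toReal - (ν (P ∩ Q)).toReal)| := by ring_nf
    _ ≤ D + D + 2 * D := by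
        have h1 := abs_add_le ((μ P).toReal - (ν P).toReal) ((μ Q).toReal - (ν Q).toReal)
        have h2 := abs_add_le (((μ P).toReal - (ν P).toReal) + ((μ Q).toReal - (ν Q).toReal))
          ((-2) * ((μ (P ∩ Q)).toReal - (ν (P ∩ Q)).toReal))
        have h3 : |(-2 : ℝ) * ((μ (P ∩ Q)).toReal - (ν (P ∩ Q)).toReal)|
            = 2 * |(μ (P ∩ Q)).toReal - (ν (P ∩ Q)).toReal| := by
          rw [abs_mul]; norm_num
        rw [h3] at h2
        linarith
    _ = 4 * D := by ring

lemma layer_cake_abs {x y : ℝ} (hx : x ∈ Set.Icc (0:ℝ) 1) (hy : y ∈ Set.Icc (0:ℝ) 1) :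
    ∫ t in Set.Icc (0:ℝ) 1, |(if t ≤ x then (1:ℝ) else 0) - (if t ≤ y then 1 else 0)| = |x - y| := by
  have hfun : (fun t => |(if t ≤ x then (1:ℝ) else 0) - (if t ≤ y then 1 else 0)|)
      = (Set.Ioc (min x y) (max x y)).indicator (fun _ => (1:ℝ)) := by
    funext t
    by_cases h1 : t ≤ x <;> by_cases h2 : t ≤ y
    · have : ¬ (min x y < t) := not_lt.2 (le_min h1 h2)
      simp [h1, h2, Set.indicator, Set.mem_Ioc, this]
    · have hm : min x y < t := lt_of_le_of_lt (min_le_right x y) (not_le.1 h2)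
      have hM : t ≤ max x y := le_trans h1 (le_max_left x y)
      simp [h1, h2, Set.indicator, Set.mem_Ioc, hm, hM]
    · have hm : min x y < t := lt_of_le_of_lt (min_le_left x y) (not_le.1 h1)
      have hM : t ≤ max x y := le_trans h2 (le_max_right x y)
      simp [h1, h2, Set.indicator, Set.mem_Ioc, hm, hM]
    · have : ¬ (t ≤ max x y) := by
        rw [not_le, max_lt_iff]
        exact ⟨not_le.1 h1, not_le.1 h2⟩
      simp [h1, h2, Set.indicator, Set.mem_Ioc, this]
  rw [hfun, setIntegral_indicator measurableSet_Ioc]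
  have hsub : Set.Icc (0:ℝ) 1 ∩ Set.Ioc (min x y) (max x y) = Set.Ioc (min x y) (max x y) := by
    apply Set.inter_eq_self_of_subset_right
    exact (Set.Ioc_subset_Icc_self).trans (Set.Icc_subset_Icc (le_min hx.1 hy.1) (max_le hx.2 hy.2))
  rw [hsub, setIntegral_const, measureReal_def, Real.volume_Ioc, smul_eq_mul, mul_one,
    ENNReal.toReal_ofReal (by simp [min_le_max])]
  rcases le_total x y with h | h
  · rw [min_eq_left h, max_eq_right h, abs_sub_comm, abs_of_nonneg (by linarith)]
  · rw [min_eq_right h, max_eq_left h, abs_of_nonneg (by linarith)]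

lemma integral_ind_eq_measure (m : Measure (ℝ × ℝ)) [IsFiniteMeasure m]
    {A B : ℝ → ℝ} (hA : Measurable A) (hB : Measurable B) (t : ℝ) :
    ∫ p, |(if t ≤ A p.1 then (1:ℝ) else 0) - (if t ≤ B p.2 then 1 else 0)| ∂m
      = (m {p : ℝ × ℝ | (t ≤ A p.1) ≠ (t ≤ B p.2)}).toReal := by
  have hSm : MeasurableSet {p : ℝ × ℝ | (t ≤ A p.1) ≠ (t ≤ B p.2)} := by
    have h1 : MeasurableSet {p : ℝ × ℝ | t ≤ A p.1} :=
      measurableSet_le measurable_const (hA.comp measurable_fst)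
    have h2 : MeasurableSet {p : ℝ × ℝ | t ≤ B p.2} :=
      measurableSet_le measurable_const (hB.comp measurable_snd)
    have : {p : ℝ × ℝ | (t ≤ A p.1) ≠ (t ≤ B p.2)}
        = ({p : ℝ × ℝ | t ≤ A p.1} \ {p : ℝ × ℝ | t ≤ B p.2})
          ∪ ({p : ℝ × ℝ | t ≤ B p.2} \ {p : ℝ × ℝ | t ≤ A p.1}) := by
      ext p
      by_cases hp1 : t ≤ A p.1 <;> by_cases hp2 : t ≤ B p.2 <;> simp [hp1, hp2]
    rw [this]
    exact (h1.diff h2).union (h2.diff h1)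
  have hfun : (fun p : ℝ × ℝ => |(if t ≤ A p.1 then (1:ℝ) else 0) - (if t ≤ B p.2 then 1 else 0)|)
      = ({p : ℝ × ℝ | (t ≤ A p.1) ≠ (t ≤ B p.2)}).indicator 1 := by
    funext p
    by_cases hp1 : t ≤ A p.1 <;> by_cases hp2 : t ≤ B p.2 <;>
      simp [hp1, hp2, Set.indicator]
  rw [hfun, integral_indicator_one hSm, measureReal_def]

/-- For two probability measures `H`, `H'` on `[0,1]²` and a continuous
strictly increasing bijection `a : [0,1] → [0,1]` with inverse `a⁻`,
`|∫ (1/2)|a(u1) − a⁻(u2)| dH − ∫ (1/2)|a(u1) − a⁻(u2)| dH'| ≤ 2·sup_{(x,y)} |H(x,y) − H'(x,y)|`. -/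
theorem integral_diff_le_sup_cdf_diff
    (μ ν : Measure (ℝ × ℝ)) [IsProbabilityMeasure μ] [IsProbabilityMeasure ν]
    (hμsupp : ∀ᵐ p ∂μ, p ∈ Set.Icc (0 : ℝ) 1 ×ˢ Set.Icc (0 : ℝ) 1)
    (hνsupp : ∀ᵐ p ∂ν, p ∈ Set.Icc (0 : ℝ) 1 ×ˢ Set.Icc (0 : ℝ) 1)
    (a ainv : ℝ → ℝ)
    (ha_cont : ContinuousOn a (Set.Icc 0 1))
    (ha_mono : StrictMonoOn a (Set.Icc 0 1))
    (ha0 : a 0 = 0) (ha1 : a 1 = 1)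
    (ha_maps : Set.MapsTo a (Set.Icc 0 1) (Set.Icc 0 1))
    (hainv_maps : Set.MapsTo ainv (Set.Icc 0 1) (Set.Icc 0 1))
    (h_left : ∀ u ∈ Set.Icc (0 : ℝ) 1, ainv (a u) = u)
    (h_right : ∀ u ∈ Set.Icc (0 : ℝ) 1, a (ainv u) = u) :
    |(∫ p, (1 / 2) * |a p.1 - ainv p.2| ∂μ) - ∫ p, (1 / 2) * |a p.1 - ainv p.2| ∂ν|
      ≤ 2 * sSup ((fun p : ℝ × ℝ => |cdf2 μ p.1 p.2 - cdf2 ν p.1 p.2|) ''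
          (Set.Icc (0 : ℝ) 1 ×ˢ Set.Icc (0 : ℝ) 1)) := by
  classical
  set D := sSup ((fun p : ℝ × ℝ => |cdf2 μ p.1 p.2 - cdf2 ν p.1 p.2|) ''
      (Set.Icc (0 : ℝ) 1 ×ˢ Set.Icc (0 : ℝ) 1)) with hDdef
  -- basic facts about D
  have hcdf_mem : ∀ (m : Measure (ℝ × ℝ)), IsProbabilityMeasure m →
      ∀ x y : ℝ, cdf2 m x y ∈ Set.Icc (0:ℝ) 1 := by
    intro m hm x y
    refine ⟨ENNReal.toReal_nonneg, ?_⟩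
    have : m (Set.Icc 0 x ×ˢ Set.Icc 0 y) ≤ 1 := prob_le_one
    simpa [cdf2] using ENNReal.toReal_mono (by simp) this
  have hBdd : BddAbove ((fun p : ℝ × ℝ => |cdf2 μ p.1 p.2 - cdf2 ν p.1 p.2|) ''
      (Set.Icc (0 : ℝ) 1 ×ˢ Set.Icc (0 : ℝ) 1)) := by
    refine ⟨2, ?_⟩
    rintro r ⟨p, _, rfl⟩
    have h1 := hcdf_mem μ inferInstance p.1 p.2
    have h2 := hcdf_mem ν inferInstance p.1 p.2
    rw [abs_sub_le_iff]
    constructor <;> [linarith [h1.2, h2.1]; linarith [h1.1, h2.2]]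
  have hD : ∀ x ∈ Set.Icc (0:ℝ) 1, ∀ y ∈ Set.Icc (0:ℝ) 1, |cdf2 μ x y - cdf2 ν x y| ≤ D := by
    intro x hx y hy
    exact le_csSup hBdd ⟨(x, y), Set.mk_mem_prod hx hy, rfl⟩
  have h01 : (0:ℝ) ∈ Set.Icc (0:ℝ) 1 := ⟨le_rfl, zero_le_one⟩
  have hD0 : 0 ≤ D := le_trans (abs_nonneg _) (hD 0 h01 0 h01)
  -- the clamp function
  set c : ℝ → ℝ := fun u => max 0 (min u 1) with hcdef
  have hc_mem : ∀ u, c u ∈ Set.Icc (0:ℝ) 1 :=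
    fun u => ⟨le_max_left _ _, max_le zero_le_one (min_le_right u 1)⟩
  have hc_id : ∀ u ∈ Set.Icc (0:ℝ) 1, c u = u := by
    intro u hu
    simp [hcdef, min_eq_left hu.2, max_eq_right hu.1]
  have hc_mono : Monotone c := fun u v h => max_le_max le_rfl (min_le_min h le_rfl)
  -- monotonicity of ainv
  have hainv_mono : MonotoneOn ainv (Set.Icc (0:ℝ) 1) := by
    intro u hu v hv huv
    by_contra h
    push_neg at h
    have := ha_mono (hainv_maps hv) (hainv_maps hu) h
    rw [h_right u hu, h_right v hv] at this
    exact absurd huv (not_le.2 this)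
  -- the clamped versions of a and ainv
  set A : ℝ → ℝ := fun u => a (c u) with hAdef
  set B : ℝ → ℝ := fun u => ainv (c u) with hBdef
  have hA_mono : Monotone A := fun u v h =>
    ha_mono.monotoneOn (hc_mem u) (hc_mem v) (hc_mono h)
  have hB_mono : Monotone B := fun u v h =>
    hainv_mono (hc_mem u) (hc_mem v) (hc_mono h)
  have hA_meas : Measurable A := hA_mono.measurable
  have hB_meas : Measurable B := hB_mono.measurable
  have hA_mem : ∀ u, A u ∈ Set.Icc (0:ℝ) 1 := fun u => ha_maps (hc_mem u)
  have hB_mem : ∀ u, B u ∈ Set.Icc (0:ℝ) 1 := fun u => hainv_maps (hc_mem u)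
  -- key order equivalences
  have key1 : ∀ u ∈ Set.Icc (0:ℝ) 1, ∀ s ∈ Set.Icc (0:ℝ) 1, (a u < s ↔ u < ainv s) := by
    intro u hu s hs
    nth_rewrite 1 [← h_right s hs]
    exact ha_mono.lt_iff_lt hu (hainv_maps hs)
  have key2 : ∀ v ∈ Set.Icc (0:ℝ) 1, ∀ s ∈ Set.Icc (0:ℝ) 1, (ainv v < s ↔ v < a s) := by
    intro v hv s hs
    nth_rewrite 2 [← h_right v hv]
    exact (ha_mono.lt_iff_lt (hainv_maps hv) hs).symm
  -- the measure on [0,1] for the layer-cake representation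
  set τ : Measure ℝ := volume.restrict (Set.Icc (0:ℝ) 1) with hτdef
  haveI hτfin : IsFiniteMeasure τ := by
    constructor
    rw [hτdef, Measure.restrict_apply_univ, Real.volume_Icc]
    exact ENNReal.ofReal_lt_top
  have hτuniv : (τ Set.univ).toReal = 1 := by
    rw [hτdef, Measure.restrict_apply_univ, Real.volume_Icc]
    norm_num
  -- the two-variable integrand
  set Φ : (ℝ × ℝ) × ℝ → ℝ :=
    fun q => |(if q.2 ≤ A q.1.1 then (1:ℝ) else 0) - (if q.2 ≤ B q.1.2 then 1 else 0)| with hΦdef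
  have hΦmeas : Measurable Φ := by
    apply Measurable.abs
    apply Measurable.sub
    · exact Measurable.ite
        (measurableSet_le measurable_snd (hA_meas.comp measurable_fst.fst))
        measurable_const measurable_const
    · exact Measurable.ite
        (measurableSet_le measurable_snd (hB_meas.comp measurable_fst.snd))
        measurable_const measurable_const
  have hΦbound : ∀ q, ‖Φ q‖ ≤ 2 := by
    intro q
    rw [Real.norm_eq_abs, hΦdef, abs_abs]
    split_ifs <;> norm_num
  have hΦint : ∀ (m : Measure (ℝ × ℝ)), IsFiniteMeasure m → Integrable Φ (m.prod τ) := by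
    intro m hm
    exact Integrable.mono' (integrable_const 2) hΦmeas.aestronglyMeasurable
      (Filter.Eventually.of_forall hΦbound)
  -- inner integral in t
  have hinner : ∀ p : ℝ × ℝ, ∫ t, Φ (p, t) ∂τ = |A p.1 - B p.2| := by
    intro p
    exact layer_cake_abs (hA_mem p.1) (hB_mem p.2)
  -- inner integral in p
  have hIeq : ∀ (m : Measure (ℝ × ℝ)), IsFiniteMeasure m → ∀ t : ℝ,
      ∫ p, Φ (p, t) ∂m = (m {p : ℝ × ℝ | (t ≤ A p.1) ≠ (t ≤ B p.2)}).toReal := by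
    intro m hm t
    exact integral_ind_eq_measure m hA_meas hB_meas t
  -- the main integral identity
  have hmain : ∀ (m : Measure (ℝ × ℝ)), IsProbabilityMeasure m →
      (∀ᵐ p ∂m, p ∈ Set.Icc (0 : ℝ) 1 ×ˢ Set.Icc (0 : ℝ) 1) →
      ∫ p, (1 / 2) * |a p.1 - ainv p.2| ∂m
        = (1/2) * ∫ t, (∫ p, Φ (p, t) ∂m) ∂τ := by
    intro m hm hmsupp
    have step1 : ∫ p, (1 / 2) * |a p.1 - ainv p.2| ∂m
        = ∫ p, (1 / 2) * |A p.1 - B p.2| ∂m := by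
      apply integral_congr_ae
      filter_upwards [hmsupp] with p hp
      rw [hAdef, hBdef]
      simp only [hc_id p.1 hp.1, hc_id p.2 hp.2]
    have step2 : ∫ p, (1 / 2) * |A p.1 - B p.2| ∂m
        = ∫ p, (1 / 2) * (∫ t, Φ (p, t) ∂τ) ∂m := by
      apply integral_congr_ae
      filter_upwards with p
      rw [hinner p]
    have step3 : ∫ p, (1 / 2) * (∫ t, Φ (p, t) ∂τ) ∂m
        = (1/2) * ∫ p, (∫ t, Φ (p, t) ∂τ) ∂m := by
      rw [integral_const_mul]
    have step4 : ∫ p, (∫ t, Φ (p, t) ∂τ) ∂m = ∫ t, (∫ p, Φ (p, t) ∂m) ∂τ :=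
      integral_integral_swap (f := fun p t => Φ (p, t)) (hΦint m inferInstance)
    rw [step1, step2, step3, step4]
  -- the integrals of the t-sections
  set Iμ : ℝ → ℝ := fun t => ∫ p, Φ (p, t) ∂μ with hIμdef
  set Iν : ℝ → ℝ := fun t => ∫ p, Φ (p, t) ∂ν with hIνdef
  have hIμint : Integrable Iμ τ := (hΦint μ inferInstance).integral_prod_right
  have hIνint : Integrable Iν τ := (hΦint ν inferInstance).integral_prod_right
  -- a.e. bound on the difference of the sections
  have hbound : ∀ᵐ t ∂τ, ‖Iμ t - Iν t‖ ≤ 4 * D := by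
    filter_upwards [ae_restrict_mem measurableSet_Icc] with t ht
    have hxeq : ∀ (m : Measure (ℝ × ℝ)),
        (∀ᵐ p ∂m, p ∈ Set.Icc (0 : ℝ) 1 ×ˢ Set.Icc (0 : ℝ) 1) →
        m {p : ℝ × ℝ | (t ≤ A p.1) ≠ (t ≤ B p.2)}
          = m {p : ℝ × ℝ | (p.1 < ainv t) ≠ (p.2 < a t)} := by
      intro m hm
      apply measure_congr
      rw [Filter.eventuallyEq_set]
      filter_upwards [hm] with p hp
      have h1 : (t ≤ A p.1) ↔ ¬ (p.1 < ainv t) := by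
        rw [hAdef]
        simp only [hc_id p.1 hp.1]
        rw [← key1 p.1 hp.1 t ht, not_lt]
      have h2 : (t ≤ B p.2) ↔ ¬ (p.2 < a t) := by
        rw [hBdef]
        simp only [hc_id p.2 hp.2]
        rw [← key2 p.2 hp.2 t ht, not_lt]
      simp only [Set.mem_setOf_eq, ne_eq, eq_iff_iff]
      rw [h1, h2]
      tauto
    rw [Real.norm_eq_abs, hIμdef, hIνdef]
    simp only []
    rw [hIeq μ inferInstance t, hIeq ν inferInstance t, hxeq μ hμsupp, hxeq ν hνsupp]
    exact xor_bound μ ν hμsupp hνsupp hD0 hD (ainv t) (a t)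
  -- conclusion
  rw [hmain μ inferInstance hμsupp, hmain ν inferInstance hνsupp]
  have hsub : ∫ t, Iμ t ∂τ - ∫ t, Iν t ∂τ = ∫ t, (Iμ t - Iν t) ∂τ :=
    (integral_sub hIμint hIνint).symm
  have habs : |(1/2 : ℝ) * ∫ t, Iμ t ∂τ - (1/2) * ∫ t, Iν t ∂τ|
      = (1/2) * |∫ t, (Iμ t - Iν t) ∂τ| := by
    rw [← mul_sub, abs_mul, hsub]
    norm_num
  have hnorm : |∫ t, (Iμ t - Iν t) ∂τ| ≤ 4 * D := by
    have := norm_integral_le_of_norm_le (integrable_const (4 * D)) hbound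
    rwa [Real.norm_eq_abs, integral_const, measureReal_def, hτuniv, one_smul] at this
  calc |(1/2 : ℝ) * ∫ t, Iμ t ∂τ - (1/2) * ∫ t, Iν t ∂τ|
      = (1/2) * |∫ t, (Iμ t - Iν t) ∂τ| := habs
    _ ≤ (1/2) * (4 * D) := by linarith [hnorm]
    _ = 2 * D := by ring
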